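/- (β-admissibility of the relaxed Wasserstein distance.) For probability measures p, q on a metric space (Z, d) (with finite first moments), W_β(p, q) ≥ 0, and W_β(p, q) = 0 if and only if p ≤ (1+β)q as measures (equivalently, p is absolutely continuous with respect to q with dp/dq ≤ 1+β q-almost everywhere). In particular, if p ≤ (1+β)q, the coupling γ supported on the diagonal with first marginal p achieves zero transport cost and lies in Π_β(p, q). -/

import Mathlib

open MeasureTheory
open scoped ENNReal

/-- **β-admissibility of the relaxed Wasserstein distance.** For Borel
probability measures `p, q` on a metric space `Z` with finite first moments, the relaxed
Wasserstein distance
`W_β(p,q) = inf { ∫ d(z₁,z₂) dγ : γ has first marginal p and second marginal ≤ (1+β)·q }`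
is nonnegative, and `W_β(p,q) = 0` iff `p ≤ (1+β)·q` as measures. In particular, if
`p ≤ (1+β)·q`, the diagonal coupling `γ = p.map (z ↦ (z,z))` lies in `Π_β(p,q)` and has
zero transport cost. -/
theorem relaxedWasserstein_nonneg_and_eq_zero_iff
    {Z : Type*} [MetricSpace Z] [MeasurableSpace Z] [BorelSpace Z]
    (p q : Measure Z) [IsProbabilityMeasure p] [IsProbabilityMeasure q]
    (β : ℝ) (hβ : 0 ≤ β)
    (hmom : ∃ z0 : Z, (∫⁻ z, edist z z0 ∂p) ≠ ⊤ ∧ (∫⁻ z, edist z z0 ∂q) ≠ ⊤) :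
    (0 ≤ ⨅ γ ∈ {γ : Measure (Z × Z) |
          γ.map Prod.fst = p ∧ γ.map Prod.snd ≤ ENNReal.ofReal (1 + β) • q},
        ∫⁻ w, edist w.1 w.2 ∂γ) ∧
    ((⨅ γ ∈ {γ : Measure (Z × Z) |
          γ.map Prod.fst = p ∧ γ.map Prod.snd ≤ ENNReal.ofReal (1 + β) • q},
        ∫⁻ w, edist w.1 w.2 ∂γ) = 0 ↔
      p ≤ ENNReal.ofReal (1 + β) • q) ∧
    (p ≤ ENNReal.ofReal (1 + β) • q →
      (p.map (fun z => (z, z))).map Prod.fst = p ∧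
      (p.map (fun z => (z, z))).map Prod.snd ≤ ENNReal.ofReal (1 + β) • q ∧
      (∫⁻ w, edist w.1 w.2 ∂(p.map (fun z => (z, z)))) = 0) := by
  set c : ℝ≥0∞ := ENNReal.ofReal (1 + β) with hc
  have hdiag : Measurable (fun z : Z => (z, z)) := measurable_id.prodMk measurable_id
  -- Properties of the diagonal coupling
  have diag_fst : (p.map (fun z => (z, z))).map Prod.fst = p := by
    rw [Measure.map_map measurable_fst hdiag]
    exact Measure.map_id
  have diag_snd : (p.map (fun z => (z, z))).map Prod.snd = p := by
    rw [Measure.map_map measurable_snd hdiag]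
    exact Measure.map_id
  have diag_cost : (∫⁻ w, edist w.1 w.2 ∂(p.map (fun z => (z, z)))) = 0 := by
    have h := lintegral_map_le (fun w : Z × Z => edist w.1 w.2) (fun z : Z => (z, z)) (μ := p)
    simp only [edist_self] at h
    simpa using le_antisymm (h.trans (by simp)) (zero_le)
  have hlast : p ≤ c • q →
      (p.map (fun z => (z, z))).map Prod.fst = p ∧
      (p.map (fun z => (z, z))).map Prod.snd ≤ c • q ∧
      (∫⁻ w, edist w.1 w.2 ∂(p.map (fun z => (z, z)))) = 0 := by
    intro h
    exact ⟨diag_fst, diag_snd.trans_le h, diag_cost⟩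
  refine ⟨zero_le, ⟨?_, ?_⟩, hlast⟩
  · -- inf = 0 → p ≤ c • q
    intro h0
    -- first: for closed sets
    have hclosed : ∀ C : Set Z, IsClosed C → p C ≤ c * q C := by
      intro C hC
      have key : ∀ δ : ℝ, 0 < δ → p C ≤ c * q (Metric.thickening δ C) := by
        intro δ hδ
        set T := Metric.thickening δ C with hT
        have hTmeas : MeasurableSet T := Metric.isOpen_thickening.measurableSet
        refine ENNReal.le_of_forall_pos_le_add fun ε hε hfin => ?_
        -- pick a coupling with cost < ofReal δ * ε
        have hpos : (0 : ℝ≥0∞) < ENNReal.ofReal δ * ε := by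
          exact ENNReal.mul_pos (ENNReal.ofReal_pos.mpr hδ).ne' (by exact_mod_cast hε.ne')
        rw [← h0] at hpos
        obtain ⟨γ, hγ⟩ := iInf_lt_iff.mp hpos
        obtain ⟨hγS, hγcost⟩ := iInf_lt_iff.mp hγ
        obtain ⟨hγ1, hγ2⟩ := hγS
        -- split
        have hsub : Prod.fst ⁻¹' C ⊆ (Prod.snd ⁻¹' T) ∪ (C ×ˢ Tᶜ) := by
          rintro ⟨x, y⟩ hx
          by_cases hy : y ∈ T
          · exact Or.inl hy
          · exact Or.inr ⟨hx, hy⟩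
        have hedge : γ (C ×ˢ Tᶜ) ≤ ε := by
          -- on C ×ˢ Tᶜ, edist ≥ ofReal δ
          have hlow : ∀ w : Z × Z, w ∈ C ×ˢ Tᶜ → ENNReal.ofReal δ ≤ edist w.1 w.2 := by
            rintro ⟨x, y⟩ ⟨hx, hy⟩
            have : ¬ Metric.infEDist y C < ENNReal.ofReal δ := by
              rw [← Metric.mem_thickening_iff_infEDist_lt]
              exact hy
            calc ENNReal.ofReal δ ≤ Metric.infEDist y C := not_lt.mp this
              _ ≤ edist y x := Metric.infEDist_le_edist_of_mem hx
              _ = edist x y := edist_comm y x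
          have hmeasCT : MeasurableSet (C ×ˢ Tᶜ) :=
            (hC.measurableSet.prod hTmeas.compl)
          have h1 : ENNReal.ofReal δ * γ (C ×ˢ Tᶜ) ≤ ∫⁻ w, edist w.1 w.2 ∂γ := by
            calc ENNReal.ofReal δ * γ (C ×ˢ Tᶜ)
                = ∫⁻ _ in C ×ˢ Tᶜ, ENNReal.ofReal δ ∂γ := by
                  rw [setLIntegral_const]
              _ ≤ ∫⁻ w in C ×ˢ Tᶜ, edist w.1 w.2 ∂γ := by
                  refine lintegral_mono_ae ?_
                  filter_upwards [ae_restrict_mem hmeasCT] with w hw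
                  exact hlow w hw
              _ ≤ ∫⁻ w, edist w.1 w.2 ∂γ :=
                  lintegral_mono' Measure.restrict_le_self le_rfl
          have h2 : ENNReal.ofReal δ * γ (C ×ˢ Tᶜ) < ENNReal.ofReal δ * ε :=
            lt_of_le_of_lt h1 hγcost
          have hδ0 : ENNReal.ofReal δ ≠ 0 := (ENNReal.ofReal_pos.mpr hδ).ne'
          exact le_of_lt ((ENNReal.mul_lt_mul_iff_right hδ0 ENNReal.ofReal_ne_top).mp h2)
        calc p C = γ (Prod.fst ⁻¹' C) := by
              rw [← hγ1, Measure.map_apply measurable_fst hC.measurableSet]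
          _ ≤ γ ((Prod.snd ⁻¹' T) ∪ (C ×ˢ Tᶜ)) := measure_mono hsub
          _ ≤ γ (Prod.snd ⁻¹' T) + γ (C ×ˢ Tᶜ) := measure_union_le _ _
          _ ≤ (c • q) T + ε := by
              gcongr
              · rw [← Measure.map_apply measurable_snd hTmeas]
                exact hγ2 T
          _ = c * q T + ε := by rw [Measure.smul_apply, smul_eq_mul]
      -- take δ → 0
      have hfin : ∃ R > 0, q (Metric.thickening R C) ≠ ∞ := ⟨1, one_pos, measure_ne_top q _⟩
      have htend : Filter.Tendsto (fun δ => c * q (Metric.thickening δ C))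
          (nhdsWithin 0 (Set.Ioi 0)) (nhds (c * q C)) :=
        ENNReal.Tendsto.const_mul (tendsto_measure_thickening_of_isClosed hfin hC) (Or.inr ENNReal.ofReal_ne_top)
      refine ge_of_tendsto htend ?_
      filter_upwards [self_mem_nhdsWithin] with δ hδ
      exact key δ hδ
    -- extend to all measurable sets
    rw [Measure.le_iff]
    intro A hA
    rw [hA.measure_eq_iSup_isClosed_of_ne_top (measure_ne_top p A)]
    refine iSup₂_le fun K hKA => iSup_le fun hK => ?_
    calc p K ≤ c * q K := hclosed K hK
      _ ≤ c * q A := mul_le_mul_right (measure_mono hKA) c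
      _ = (c • q) A := by rw [Measure.smul_apply, smul_eq_mul]
  · -- p ≤ c • q → inf = 0
    intro h
    refine le_antisymm ?_ (zero_le)
    have hmem : (p.map (fun z => (z, z))) ∈ {γ : Measure (Z × Z) |
        γ.map Prod.fst = p ∧ γ.map Prod.snd ≤ c • q} := ⟨diag_fst, diag_snd.trans_le h⟩
    calc (⨅ γ ∈ {γ : Measure (Z × Z) |
          γ.map Prod.fst = p ∧ γ.map Prod.snd ≤ c • q}, ∫⁻ w, edist w.1 w.2 ∂γ)
        ≤ ∫⁻ w, edist w.1 w.2 ∂(p.map (fun z => (z, z))) := iInf₂_le _ hmem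
      _ = 0 := diag_cost
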